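/- There exists a label ranking model that is sub-2 calibrated but not full-rank calibrated: for an item set of 3 items, there is a finite probability space with random variables X (two features, each with probability 1/2) and Π (uniform over all 6 rankings, conditionally on either feature) and a model h assigning probability 2/6 to the rankings i1≻i2≻i3 and i3≻i2≻i1 and 1/12 to each remaining ranking, such that all sub-2 marginals of h(X) equal the true conditional pairwise probabilities (all 1/2), so h is sub-2 calibrated, while h(X) differs from the true conditional ranking distribution, so h is not full-rank calibrated. -/

import Mathlib

open scoped Classical
noncomputable section

/-- Probability of an event `A` under a weight function `w` on a finite space. -/
def Pr {Ω : Type*} [Fintype Ω] (w : Ω → ℝ) (A : Set Ω) : ℝ :=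
  ∑ ω, if ω ∈ A then w ω else 0

/-- Conditional probability `P(A | B)`. -/
def condPr {Ω : Type*} [Fintype Ω] (w : Ω → ℝ) (A B : Set Ω) : ℝ :=
  Pr w (A ∩ B) / Pr w B

/-- Sub-k marginal of a distribution `p` over rankings of `Fin 3` (a ranking is
an item-to-position bijection): the probability of a sub-ranking `ρ` of
`ℬ ⊆ Fin 3` is the total mass of full rankings containing `ρ`. -/
def subProj3 (ℬ : Finset (Fin 3)) (p : Equiv.Perm (Fin 3) → ℝ)
    (ρ : {x // x ∈ ℬ} ≃ Fin ℬ.card) : ℝ :=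
  ∑ π : Equiv.Perm (Fin 3),
    if (∀ i j : {x // x ∈ ℬ}, ρ i < ρ j ↔ π i.1 < π j.1) then p π else 0

private lemma permSum (f : Equiv.Perm (Fin 3) → ℝ) :
    ∑ π, f π = f (Equiv.refl _) + f (Equiv.swap 0 1) + f (Equiv.swap 0 2)
      + f (Equiv.swap 1 2) + f (Equiv.swap 0 1 * Equiv.swap 1 2)
      + f (Equiv.swap 1 2 * Equiv.swap 0 1) := by
  rw [show (Finset.univ : Finset (Equiv.Perm (Fin 3))) =
      {Equiv.refl _, Equiv.swap 0 1, Equiv.swap 0 2, Equiv.swap 1 2,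
        Equiv.swap 0 1 * Equiv.swap 1 2, Equiv.swap 1 2 * Equiv.swap 0 1} from by decide]
  rw [Finset.sum_insert (by decide), Finset.sum_insert (by decide),
    Finset.sum_insert (by decide), Finset.sum_insert (by decide),
    Finset.sum_insert (by decide), Finset.sum_singleton]
  ring

private lemma covL {α : Type*} {a b : α} (cov : ∀ i, i = a ∨ i = b) {m : ℕ}
    (ρ : α → Fin m) (hab : ρ a < ρ b) (e : α → Fin 3) :
    (∀ i j, ρ i < ρ j ↔ e i < e j) ↔ e a < e b := by
  constructor
  · intro H; exact (H a b).mp hab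
  · intro hE i j
    rcases cov i with rfl | rfl <;> rcases cov j with rfl | rfl
    · exact iff_of_false (lt_irrefl _) (lt_irrefl _)
    · exact iff_of_true hab hE
    · exact iff_of_false (asymm hab) (asymm hE)
    · exact iff_of_false (lt_irrefl _) (lt_irrefl _)

private lemma CIff (ℬ : Finset (Fin 3)) (h2 : ℬ.card = 2)
    (ρ : {x // x ∈ ℬ} ≃ Fin ℬ.card) (σ : Equiv.Perm (Fin 3)) :
    (∀ i j : {x // x ∈ ℬ}, ρ i < ρ j ↔
        (Fin.revPerm * σ : Equiv.Perm (Fin 3)) i.1 < (Fin.revPerm * σ : Equiv.Perm (Fin 3)) j.1) ↔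
      ¬ (∀ i j : {x // x ∈ ℬ}, ρ i < ρ j ↔ σ i.1 < σ j.1) := by
  obtain ⟨x, y, hxy, rfl⟩ := Finset.card_eq_two.mp h2
  have hax : x ∈ ({x, y} : Finset (Fin 3)) := by simp
  have hby : y ∈ ({x, y} : Finset (Fin 3)) := by simp
  set a : {z // z ∈ ({x, y} : Finset (Fin 3))} := ⟨x, hax⟩ with ha
  set b : {z // z ∈ ({x, y} : Finset (Fin 3))} := ⟨y, hby⟩ with hb
  have cov : ∀ i : {z // z ∈ ({x, y} : Finset (Fin 3))}, i = a ∨ i = b := by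
    rintro ⟨z, hz⟩
    rcases Finset.mem_insert.mp hz with h | h
    · exact Or.inl (Subtype.ext h)
    · exact Or.inr (Subtype.ext (Finset.mem_singleton.mp h))
  have hab : a ≠ b := fun h => hxy (congrArg Subtype.val h)
  have hρ : ρ a ≠ ρ b := fun h => hab (ρ.injective h)
  have hσne : σ a.1 ≠ σ b.1 := fun h => hab (Subtype.ext (σ.injective h))
  have happ : ∀ i : {z // z ∈ ({x, y} : Finset (Fin 3))},
      (Fin.revPerm * σ : Equiv.Perm (Fin 3)) i.1 = Fin.rev (σ i.1) := fun _ => rfl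
  simp only [happ]
  rcases hρ.lt_or_gt with hlt | hlt
  · rw [covL cov (fun i => ρ i) hlt (fun i => Fin.rev (σ i.1)),
      covL cov (fun i => ρ i) hlt (fun i => σ i.1), Fin.rev_lt_rev]
    exact ⟨fun h h' => asymm h h', fun h => (hσne.lt_or_gt).resolve_left h⟩
  · have cov' : ∀ i : {z // z ∈ ({x, y} : Finset (Fin 3))}, i = b ∨ i = a :=
      fun i => (cov i).symm
    rw [covL cov' (fun i => ρ i) hlt (fun i => Fin.rev (σ i.1)),
      covL cov' (fun i => ρ i) hlt (fun i => σ i.1), Fin.rev_lt_rev]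
    exact ⟨fun h h' => asymm h h', fun h => (hσne.symm.lt_or_gt).resolve_left h⟩

private lemma halfLemma (ℬ : Finset (Fin 3)) (h2 : ℬ.card = 2)
    (ρ : {x // x ∈ ℬ} ≃ Fin ℬ.card) (f : Equiv.Perm (Fin 3) → ℝ)
    (hf : ∀ σ, f (Fin.revPerm * σ) = f σ) :
    ∑ σ : Equiv.Perm (Fin 3),
        (if (∀ i j : {x // x ∈ ℬ}, ρ i < ρ j ↔ σ i.1 < σ j.1) then f σ else 0)
      = (∑ σ, f σ) / 2 := by
  set C : Equiv.Perm (Fin 3) → Prop :=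
    fun σ => ∀ i j : {x // x ∈ ℬ}, ρ i < ρ j ↔ σ i.1 < σ j.1 with hC
  have key : ∑ σ, (if C σ then f σ else 0) = ∑ σ, (if ¬ C σ then f σ else 0) := by
    rw [← Equiv.sum_comp (Equiv.mulLeft Fin.revPerm)
      (fun σ => if C σ then f σ else 0)]
    refine Finset.sum_congr rfl fun σ _ => ?_
    simp only [Equiv.coe_mulLeft]
    rw [hf σ]
    exact if_congr (CIff ℬ h2 ρ σ) rfl rfl
  have tot : ∑ σ, (if C σ then f σ else 0) + ∑ σ, (if ¬ C σ then f σ else 0)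
      = ∑ σ, f σ := by
    rw [← Finset.sum_add_distrib]
    refine Finset.sum_congr rfl fun σ _ => ?_
    by_cases h : C σ
    · rw [if_pos h, if_neg (not_not_intro h), add_zero]
    · rw [if_neg h, if_pos h, zero_add]
  rw [← key] at tot
  linarith

private def p0fun : Equiv.Perm (Fin 3) → ℝ :=
  fun π => if π = Equiv.refl (Fin 3) ∨ π = Fin.revPerm then 2 / 6 else 1 / 12

private lemma p0fun_sum : ∑ π, p0fun π = 1 := by
  simp only [permSum, p0fun]
  rw [if_pos (by decide), if_neg (by decide), if_pos (by decide), if_neg (by decide),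
    if_neg (by decide), if_neg (by decide)]
  norm_num

private lemma p0fun_inv : ∀ σ, p0fun (Fin.revPerm * σ) = p0fun σ := by
  have hiff : ∀ σ : Equiv.Perm (Fin 3),
      ((Fin.revPerm * σ : Equiv.Perm (Fin 3)) = Equiv.refl (Fin 3) ∨
        (Fin.revPerm * σ : Equiv.Perm (Fin 3)) = Fin.revPerm) ↔
      (σ = Equiv.refl (Fin 3) ∨ σ = Fin.revPerm) := by decide
  intro σ
  exact if_congr (hiff σ) rfl rfl

private lemma PrUniv : Pr (fun _ : Fin 2 × Equiv.Perm (Fin 3) => (1/12:ℝ)) Set.univ = 1 := by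
  rw [Pr]
  simp [Finset.card_univ, Fintype.card_perm]
  norm_num [Nat.factorial]

theorem exists_sub2_calibrated_not_full_rank_calibrated :
    ∃ (Ω : Type) (_ : Fintype Ω) (w : Ω → ℝ) (X : Ω → Fin 2)
      (R : Ω → Equiv.Perm (Fin 3)) (h : Fin 2 → Equiv.Perm (Fin 3) → ℝ),
      (∀ ω, 0 ≤ w ω) ∧ (∑ ω, w ω = 1) ∧
      (∀ x, (∀ π, 0 ≤ h x π) ∧ ∑ π, h x π = 1) ∧
      -- the two features each have probability 1/2
      (∀ x : Fin 2, Pr w {ω | X ω = x} = 1 / 2) ∧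
      -- conditionally on either feature, the rankings are uniform
      (∀ (x : Fin 2) (π : Equiv.Perm (Fin 3)),
        condPr w {ω | R ω = π} {ω | X ω = x} = 1 / 6) ∧
      -- the model predicts 2/6 on the identity and the reversal, 1/12 elsewhere
      (∀ (x : Fin 2) (π : Equiv.Perm (Fin 3)),
        h x π = if π = Equiv.refl (Fin 3) ∨ π = Fin.revPerm then 2 / 6 else 1 / 12) ∧
      -- h is sub-2 calibrated
      (∀ ℬ : Finset (Fin 3), ℬ.card = 2 →
        ∀ (ρ : {x // x ∈ ℬ} ≃ Fin ℬ.card) (q : ({x // x ∈ ℬ} ≃ Fin ℬ.card) → ℝ),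
          0 < Pr w {ω | subProj3 ℬ (h (X ω)) = q} →
          condPr w {ω | ∀ i j : {x // x ∈ ℬ}, ρ i < ρ j ↔ R ω i.1 < R ω j.1}
            {ω | subProj3 ℬ (h (X ω)) = q} = q ρ) ∧
      -- h is not full-rank calibrated
      ¬ (∀ (π : Equiv.Perm (Fin 3)) (p : Equiv.Perm (Fin 3) → ℝ),
          0 < Pr w {ω | h (X ω) = p} →
          condPr w {ω | R ω = π} {ω | h (X ω) = p} = p π) := by
  refine ⟨Fin 2 × Equiv.Perm (Fin 3), inferInstance, fun _ => 1 / 12, Prod.fst,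
    Prod.snd, fun _ => p0fun, fun _ => by norm_num, ?_, ?_, ?_, ?_, fun _ _ => rfl, ?_, ?_⟩
  · -- total mass 1
    simp [Finset.card_univ, Fintype.card_perm]
    norm_num [Nat.factorial]
  · -- h is a distribution
    intro x
    refine ⟨fun π => ?_, p0fun_sum⟩
    simp only [p0fun]
    split <;> norm_num
  · -- features have probability 1/2
    intro x
    rw [Pr, Fintype.sum_prod_type]
    simp [Finset.sum_ite_eq', Fintype.card_perm]
    norm_num [Nat.factorial]
  · -- conditional uniformity
    intro x π
    rw [condPr]
    have h1 : Pr (fun _ : Fin 2 × Equiv.Perm (Fin 3) => (1/12:ℝ))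
        ({ω | ω.2 = π} ∩ {ω | ω.1 = x}) = 1/12 := by
      rw [Pr, Fintype.sum_prod_type]
      simp only [Set.mem_inter_iff, Set.mem_setOf_eq]
      simp [Finset.sum_ite_eq', Finset.sum_ite_eq, ite_and]
    have h2 : Pr (fun _ : Fin 2 × Equiv.Perm (Fin 3) => (1/12:ℝ)) {ω | ω.1 = x} = 1/2 := by
      rw [Pr, Fintype.sum_prod_type]
      simp [Finset.sum_ite_eq', Fintype.card_perm]
      norm_num [Nat.factorial]
    rw [h1, h2]
    norm_num
  · -- sub-2 calibration
    intro ℬ h2 ρ q hq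
    have hq' : subProj3 ℬ p0fun = q := by
      by_contra hne
      have hE : {ω : Fin 2 × Equiv.Perm (Fin 3) | subProj3 ℬ p0fun = q} = ∅ := by
        ext ω; simp [hne]
      rw [show {ω : Fin 2 × Equiv.Perm (Fin 3) | subProj3 ℬ ((fun _ => p0fun) ω.1) = q}
          = {ω : Fin 2 × Equiv.Perm (Fin 3) | subProj3 ℬ p0fun = q} from rfl, hE] at hq
      simp [Pr] at hq
    have hSuniv : {ω : Fin 2 × Equiv.Perm (Fin 3) | subProj3 ℬ ((fun _ => p0fun) ω.1) = q}
        = Set.univ := by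
      ext ω; simp [hq']
    rw [condPr, hSuniv, Set.inter_univ, PrUniv, div_one, ← hq']
    have hval := halfLemma ℬ h2 ρ p0fun p0fun_inv
    rw [subProj3, hval, p0fun_sum]
    have hhalf : (∑ σ : Equiv.Perm (Fin 3),
        @ite ℝ (∀ i j : {x // x ∈ ℬ}, ρ i < ρ j ↔ σ i.1 < σ j.1)
          (Classical.propDecidable _) (1/12) 0) = 1/4 := by
      refine Eq.trans (Finset.sum_congr rfl fun σ _ => ?_)
        ((halfLemma ℬ h2 ρ (fun _ => (1/12:ℝ)) (fun _ => rfl)).trans ?_)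
      · by_cases hP : (∀ i j : {x // x ∈ ℬ}, ρ i < ρ j ↔ σ i.1 < σ j.1) <;> simp [hP]
      · simp [Finset.card_univ, Fintype.card_perm]
        norm_num [Nat.factorial]
    rw [Pr, Fintype.sum_prod_type]
    simp only [Set.mem_setOf_eq]
    rw [Fin.sum_univ_two]
    rw [show (∑ x : Equiv.Perm (Fin 3), if ∀ (i j : {x // x ∈ ℬ}), ρ i < ρ j ↔ x i.1 < x j.1 then (1/12:ℝ) else 0) = 1/4 from by convert hhalf]
    norm_num
  · -- not full-rank calibrated
    intro H
    have hpos : (0:ℝ) < Pr (fun _ : Fin 2 × Equiv.Perm (Fin 3) => (1/12:ℝ))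
        {ω : Fin 2 × Equiv.Perm (Fin 3) | (fun _ => p0fun) ω.1 = p0fun} := by
      rw [show {ω : Fin 2 × Equiv.Perm (Fin 3) | (fun _ => p0fun) ω.1 = p0fun}
          = Set.univ from by ext ω; simp, PrUniv]
      norm_num
    have h1 := H (Equiv.refl (Fin 3)) p0fun hpos
    rw [condPr, show {ω : Fin 2 × Equiv.Perm (Fin 3) | (fun _ => p0fun) ω.1 = p0fun}
        = Set.univ from by ext ω; simp, Set.inter_univ, PrUniv, div_one] at h1
    have h2 : Pr (fun _ : Fin 2 × Equiv.Perm (Fin 3) => (1/12:ℝ))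
        {ω : Fin 2 × Equiv.Perm (Fin 3) | ω.2 = Equiv.refl (Fin 3)} = 1/6 := by
      rw [Pr, Fintype.sum_prod_type]
      simp [Finset.sum_ite_eq']
      norm_num
    rw [h2] at h1
    rw [show p0fun (Equiv.refl (Fin 3)) = 2/6 from by
      simp only [p0fun]; exact if_pos (by decide)] at h1
    norm_num at h1
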